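/- Let (𝒜, ℬ, 𝒞) be a recollement of abelian categories. If i^* is exact, then i^! j_! = 0, i.e. i^!(j_!(C)) ≅ 0 for every object C of 𝒞; dually, if i^! is exact, then i^* j_* = 0. -/

import Mathlib

open CategoryTheory Limits Abelian

universe w₁ w₂ w₃ v₁ v₂ v₃ u₁ u₂ u₃

/-- A recollement of abelian categories. Exactness conditions on the six functors
(`i_*`, `j^*` exact; `i^*`, `j_!` right exact; `i^!`, `j_*` left exact) are automatic
from the adjunctions. -/
structure Recollement (𝒜 : Type u₁) (ℬ : Type u₂) (𝒞 : Type u₃)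
    [Category.{v₁} 𝒜] [Category.{v₂} ℬ] [Category.{v₃} 𝒞]
    [Abelian 𝒜] [Abelian ℬ] [Abelian 𝒞] where
  /-- `i_* : 𝒜 ⥤ ℬ` -/
  iStar : 𝒜 ⥤ ℬ
  /-- `i^* : ℬ ⥤ 𝒜` -/
  iUS : ℬ ⥤ 𝒜
  /-- `i^! : ℬ ⥤ 𝒜` -/
  iUE : ℬ ⥤ 𝒜
  /-- `j^* : ℬ ⥤ 𝒞` -/
  jUS : ℬ ⥤ 𝒞
  /-- `j_! : 𝒞 ⥤ ℬ` -/
  jLE : 𝒞 ⥤ ℬ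
  /-- `j_* : 𝒞 ⥤ ℬ` -/
  jLS : 𝒞 ⥤ ℬ
  /-- the adjunction `(i^*, i_*)` -/
  adj₁ : iUS ⊣ iStar
  /-- the adjunction `(i_*, i^!)` -/
  adj₂ : iStar ⊣ iUE
  /-- the adjunction `(j_!, j^*)` -/
  adj₃ : jLE ⊣ jUS
  /-- the adjunction `(j^*, j_*)` -/
  adj₄ : jUS ⊣ jLS
  iStar_full : iStar.Full
  iStar_faithful : iStar.Faithful
  jLE_full : jLE.Full
  jLE_faithful : jLE.Faithful
  jLS_full : jLS.Full
  jLS_faithful : jLS.Faithful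
  /-- `Im i_* = Ker j^*` -/
  essImage_iStar : ∀ X : ℬ, iStar.essImage X ↔ IsZero (jUS.obj X)

variable {𝒟 : Type u₁} [Category.{v₁} 𝒟] [Abelian 𝒟]

/-- a subcategory (given by a set of objects) closed under isomorphisms and (finite) direct
sums. -/
def IsGoodSubcat (S : Set 𝒟) : Prop :=
  (∀ ⦃X Y : 𝒟⦄, (X ≅ Y) → X ∈ S → Y ∈ S) ∧ ∀ X Y : 𝒟, X ∈ S → Y ∈ S → (X ⊞ Y) ∈ S

/-- exactness at `Y` of `X ⟶ Y ⟶ Z`. -/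
def ExactAt {X Y Z : 𝒟} (f : X ⟶ Y) (g : Y ⟶ Z) : Prop :=
  ∃ w : f ≫ g = 0, (ShortComplex.mk f g w).Exact

section Ext
variable [HasExt.{w₁} 𝒟]

/-- `⊥S`: objects `M` with `Ext^i(M, N) = 0` for all `i ≥ 1`, `N ∈ S`. -/
def leftPerp (S : Set 𝒟) : Set 𝒟 :=
  {M | ∀ N ∈ S, ∀ i : ℕ, 1 ≤ i → Subsingleton (Ext M N i)}

/-- a self-orthogonal subcategory. -/
def SelfOrthogonal (S : Set 𝒟) : Prop :=
  ∀ M ∈ S, ∀ N ∈ S, ∀ i : ℕ, 1 ≤ i → Subsingleton (Ext M N i)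

/-- The subcategory `X_S` : objects `M ∈ ⊥S` admitting an exact sequence
`0 ⟶ M ⟶ W 0 ⟶ W 1 ⟶ ⋯` with all `W i ∈ S` and images of differentials in `⊥S`. -/
def wakClass (S : Set 𝒟) : Set 𝒟 :=
  {M | M ∈ leftPerp S ∧ ∃ (W : ℕ → 𝒟) (f : M ⟶ W 0) (d : ∀ n, W n ⟶ W (n + 1)),
    (∀ n, W n ∈ S) ∧ Mono f ∧ ExactAt f (d 0) ∧ (∀ n, ExactAt (d n) (d (n + 1))) ∧
    (∀ n, image (d n) ∈ leftPerp S)}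

/-- a wakamatsu tilting subcategory. -/
def WakamatsuTilting (S : Set 𝒟) : Prop :=
  SelfOrthogonal S ∧ ∀ P : 𝒟, Projective P → P ∈ wakClass S

end Ext

/-- `Fac S`. -/
def Fac (S : Set 𝒟) : Set 𝒟 :=
  {X | ∃ M ∈ S, ∃ f : M ⟶ X, Epi f}

/-- `f : A ⟶ M` is a left `S`-approximation of `A`. -/
def IsLeftApprox (S : Set 𝒟) {A M : 𝒟} (f : A ⟶ M) : Prop :=
  M ∈ S ∧ ∀ M' ∈ S, ∀ g : A ⟶ M', ∃ h : M ⟶ M', f ≫ h = g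

/-- `f : M ⟶ A` is a right `S`-approximation of `A`. -/
def IsRightApprox (S : Set 𝒟) {M A : 𝒟} (f : M ⟶ A) : Prop :=
  M ∈ S ∧ ∀ M' ∈ S, ∀ g : M' ⟶ A, ∃ h : M' ⟶ M, h ≫ f = g

/-- a contravariantly finite subcategory. -/
def ContravariantlyFinite (S : Set 𝒟) : Prop :=
  ∀ A : 𝒟, ∃ (M : 𝒟) (f : M ⟶ A), IsRightApprox S f

section Ext
variable [HasExt.{w₁} 𝒟]

/-- a weak support τ-tilting subcategory. -/
def WeakSupportTauTilting (S : Set 𝒟) : Prop :=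
  (∀ M ∈ S, ∀ L ∈ Fac S, Subsingleton (Ext M L 1)) ∧
  ∀ P : 𝒟, Projective P → ∃ (M₀ M₁ : 𝒟) (f : P ⟶ M₀) (g : M₀ ⟶ M₁),
    M₀ ∈ S ∧ M₁ ∈ S ∧ Epi g ∧ ExactAt f g ∧ IsLeftApprox S f

/-- a support τ-tilting subcategory. -/
def SupportTauTilting (S : Set 𝒟) : Prop :=
  WeakSupportTauTilting S ∧ ContravariantlyFinite S

/-- `^⊥₁ S`. -/
def perpOneLeft (S : Set 𝒟) : Set 𝒟 :=
  {A | ∀ M ∈ S, Subsingleton (Ext A M 1)}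

end Ext

/-- `S^⊥₀`. -/
def perpZeroRight (S : Set 𝒟) : Set 𝒟 :=
  {A | ∀ M ∈ S, ∀ f : M ⟶ A, f = 0}

/-- a torsion pair. -/
def TorsionPair (T F : Set 𝒟) : Prop :=
  (∀ X ∈ T, ∀ Y ∈ F, ∀ f : X ⟶ Y, f = 0) ∧
  ∀ B : 𝒟, ∃ (X Y : 𝒟) (f : X ⟶ B) (g : B ⟶ Y),
    X ∈ T ∧ Y ∈ F ∧ Mono f ∧ Epi g ∧ ExactAt f g

/-- a τ-cotorsion torsion triple. -/
def TauCotorsionTorsionTriple [HasExt.{w₁} 𝒟] (L D F : Set 𝒟) : Prop :=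
  L = perpOneLeft D ∧
  (∀ P : 𝒟, Projective P → ∃ (D₀ C₀ : 𝒟) (f : P ⟶ D₀) (g : D₀ ⟶ C₀),
    D₀ ∈ L ∩ D ∧ C₀ ∈ L ∧ Epi g ∧ ExactAt f g ∧ IsLeftApprox D f) ∧
  ContravariantlyFinite (L ∩ D) ∧ TorsionPair D F

/-- the closure under isomorphism of the image of a subcategory under a functor. -/
def imgCl {𝒟' : Type u₂} [Category.{v₂} 𝒟'] (F : 𝒟 ⥤ 𝒟') (S : Set 𝒟) : Set 𝒟' :=
  {X | ∃ Y ∈ S, Nonempty (F.obj Y ≅ X)}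


section RecollementAux

variable {𝒜 : Type u₁} {ℬ : Type u₂} {𝒞 : Type u₃}
    [Category.{v₁} 𝒜] [Category.{v₂} ℬ] [Category.{v₃} 𝒞]
    [Abelian 𝒜] [Abelian ℬ] [Abelian 𝒞] (R : Recollement 𝒜 ℬ 𝒞)

lemma isZero_of_mono_of_isZero {𝒳 : Type*} [Category 𝒳] [Abelian 𝒳] {X Y : 𝒳}
    (f : X ⟶ Y) [Mono f] (h : IsZero Y) : IsZero X := by
  rw [IsZero.iff_id_eq_zero, ← cancel_mono f, h.eq_of_tgt f 0]
  simp

lemma isZero_of_epi_of_isZero {𝒳 : Type*} [Category 𝒳] [Abelian 𝒳] {X Y : 𝒳}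
    (f : X ⟶ Y) [Epi f] (h : IsZero X) : IsZero Y := by
  rw [IsZero.iff_id_eq_zero, ← cancel_epi f, h.eq_of_src f 0]
  simp

lemma Rec.jUS_iStar_isZero (A : 𝒜) : IsZero (R.jUS.obj (R.iStar.obj A)) :=
  (R.essImage_iStar _).1 ⟨A, ⟨Iso.refl _⟩⟩

/-- `i^* j_! = 0` always. -/
lemma Rec.iUS_jLE_isZero (C : 𝒞) : IsZero (R.iUS.obj (R.jLE.obj C)) := by
  rw [IsZero.iff_id_eq_zero]
  refine (R.adj₁.homEquiv _ _).injective ((R.adj₃.homEquiv _ _).injective ?_)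
  exact (Rec.jUS_iStar_isZero R _).eq_of_tgt _ _

/-- `i^! j_* = 0` always. -/
lemma Rec.iUE_jLS_isZero (C : 𝒞) : IsZero (R.iUE.obj (R.jLS.obj C)) := by
  rw [IsZero.iff_id_eq_zero]
  refine ((R.adj₂.homEquiv _ _).symm.injective ((R.adj₄.homEquiv _ _).symm.injective ?_))
  exact (Rec.jUS_iStar_isZero R _).eq_of_src _ _

/-- the counit `i_* i^! B ⟶ B` is a monomorphism. -/
lemma Rec.mono_counit (B : ℬ) : Mono (R.adj₂.counit.app B) := by
  haveI := R.iStar_full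
  haveI := R.iStar_faithful
  set ε := R.adj₂.counit.app B with hε
  haveI : Functor.PreservesMonomorphisms R.jUS :=
    Functor.preservesMonomorphisms_of_adjunction R.adj₃
  have hK : IsZero (R.jUS.obj (kernel ε)) :=
    isZero_of_mono_of_isZero (R.jUS.map (kernel.ι ε)) (Rec.jUS_iStar_isZero R _)
  obtain ⟨A, ⟨e⟩⟩ := (R.essImage_iStar _).2 hK
  obtain ⟨φ, hφ⟩ := R.iStar.map_surjective (e.hom ≫ kernel.ι ε)
  have h0 : (R.adj₂.homEquiv A B).symm φ = 0 := by
    rw [Adjunction.homEquiv_counit, hφ, Category.assoc, ← hε, kernel.condition, comp_zero]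
  have hz : (R.adj₂.homEquiv A B).symm 0 = 0 := by
    rw [Adjunction.homEquiv_counit, Functor.map_zero, zero_comp]
  have hφ0 : φ = 0 := (R.adj₂.homEquiv A B).symm.injective (h0.trans hz.symm)
  have hι : kernel.ι ε = 0 := by
    have h1 : e.hom ≫ kernel.ι ε = 0 := by rw [← hφ, hφ0, Functor.map_zero]
    rw [← Category.id_comp (kernel.ι ε), ← e.inv_hom_id, Category.assoc, h1, comp_zero]
  exact Preadditive.mono_of_kernel_zero hι

/-- the unit `B ⟶ i_* i^* B` is an epimorphism. -/
lemma Rec.epi_unit (B : ℬ) : Epi (R.adj₁.unit.app B) := by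
  haveI := R.iStar_full
  haveI := R.iStar_faithful
  set η := R.adj₁.unit.app B with hη
  haveI : Functor.PreservesEpimorphisms R.jUS :=
    Functor.preservesEpimorphisms_of_adjunction R.adj₄
  have hC : IsZero (R.jUS.obj (cokernel η)) :=
    isZero_of_epi_of_isZero (R.jUS.map (cokernel.π η)) (Rec.jUS_iStar_isZero R _)
  obtain ⟨A, ⟨e⟩⟩ := (R.essImage_iStar _).2 hC
  obtain ⟨φ, hφ⟩ := R.iStar.map_surjective (cokernel.π η ≫ e.inv)
  have h0 : R.adj₁.homEquiv B A φ = 0 := by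
    rw [Adjunction.homEquiv_unit, hφ, ← Category.assoc, ← hη, cokernel.condition, zero_comp]
  have hz : R.adj₁.homEquiv B A 0 = 0 := by
    rw [Adjunction.homEquiv_unit, Functor.map_zero, comp_zero]
  have hφ0 : φ = 0 := (R.adj₁.homEquiv B A).injective (h0.trans hz.symm)
  have hπ : cokernel.π η = 0 := by
    have h1 : cokernel.π η ≫ e.inv = 0 := by rw [← hφ, hφ0, Functor.map_zero]
    rw [← Category.comp_id (cokernel.π η), ← e.inv_hom_id, ← Category.assoc, h1, zero_comp]
  exact Preadditive.epi_of_cokernel_zero hπ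

end RecollementAux

/-- In a recollement, if `i^*` is exact then `i^! j_! = 0`, and if `i^!` is exact then
`i^* j_* = 0`. -/
theorem stmt_13
    {𝒜 : Type u₁} {ℬ : Type u₂} {𝒞 : Type u₃}
    [Category.{v₁} 𝒜] [Category.{v₂} ℬ] [Category.{v₃} 𝒞]
    [Abelian 𝒜] [Abelian ℬ] [Abelian 𝒞]
    (R : Recollement 𝒜 ℬ 𝒞) :
    (∀ (_ : PreservesFiniteLimits R.iUS) (_ : PreservesFiniteColimits R.iUS) (X : 𝒞),
      IsZero (R.iUE.obj (R.jLE.obj X))) ∧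
    (∀ (_ : PreservesFiniteLimits R.iUE) (_ : PreservesFiniteColimits R.iUE) (X : 𝒞),
      IsZero (R.iUS.obj (R.jLS.obj X))) := by
  haveI := R.iStar_full
  haveI := R.iStar_faithful
  constructor
  · intro hL _ C
    haveI := hL
    haveI := Rec.mono_counit R (R.jLE.obj C)
    exact isZero_of_mono_of_isZero
      (inv (R.adj₁.counit.app (R.iUE.obj (R.jLE.obj C))) ≫
        R.iUS.map (R.adj₂.counit.app (R.jLE.obj C)))
      (Rec.iUS_jLE_isZero R C)
  · intro _ hR C
    haveI := hR
    haveI := Rec.epi_unit R (R.jLS.obj C)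
    exact isZero_of_epi_of_isZero
      (R.iUE.map (R.adj₁.unit.app (R.jLS.obj C)) ≫
        inv (R.adj₂.unit.app (R.iUS.obj (R.jLS.obj C))))
      (Rec.iUE_jLS_isZero R C)
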